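/- Let n = 4. Every coadjoint N-orbit Ω ⊆ 𝔫* on which rk B_f = 4 (for some, equivalently every, f ∈ Ω) contains exactly one linear form h with Supp(h) = {(2,3), (1,4)} or Supp(h) = {(1,4)}; conversely, every h ∈ 𝔫* with Supp(h) equal to one of these two sets satisfies rk B_h = 4. -/

import Mathlib

open Matrix

/-- The Lie algebra `𝔫` of strictly upper triangular `n × n` matrices over `F`,
as a submodule of the matrix space. -/
def strictUpper (F : Type*) [Field F] (n : ℕ) : Submodule F (Matrix (Fin n) (Fin n) F) where
  carrier := {x | ∀ i j : Fin n, j ≤ i → x i j = 0}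
  add_mem' := by
    intro x y hx hy i j hij
    show x i j + y i j = 0
    rw [hx i j hij, hy i j hij, add_zero]
  zero_mem' := by intro i j _; rfl
  smul_mem' := by
    intro c x hx i j hij
    show c * x i j = 0
    rw [hx i j hij, mul_zero]

lemma mul_mem_strictUpper {F : Type*} [Field F] {n : ℕ} {x y : Matrix (Fin n) (Fin n) F}
    (hx : x ∈ strictUpper F n) (hy : y ∈ strictUpper F n) : x * y ∈ strictUpper F n := by
  intro i j hji
  rw [Matrix.mul_apply]
  refine Finset.sum_eq_zero fun k _ => ?_
  rcases le_or_gt k i with h | h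
  · rw [hx i k h, zero_mul]
  · rw [hy k j (hji.trans h.le), mul_zero]

/-- The Lie bracket (commutator) on `𝔫`, as a bilinear map. -/
def commBracket (F : Type*) [Field F] (n : ℕ) :
    strictUpper F n →ₗ[F] strictUpper F n →ₗ[F] strictUpper F n :=
  LinearMap.mk₂ F
    (fun x y => ⟨(x : Matrix (Fin n) (Fin n) F) * y - (y : Matrix (Fin n) (Fin n) F) * x,
      sub_mem (mul_mem_strictUpper x.2 y.2) (mul_mem_strictUpper y.2 x.2)⟩)
    (fun x x' y => by
      apply Subtype.ext
      show ((x : Matrix (Fin n) (Fin n) F) + x') * y - (y : Matrix (Fin n) (Fin n) F) * (x + x')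
          = ((x : Matrix (Fin n) (Fin n) F) * y - (y : Matrix (Fin n) (Fin n) F) * x)
            + ((x' : Matrix (Fin n) (Fin n) F) * y - (y : Matrix (Fin n) (Fin n) F) * x')
      noncomm_ring)
    (fun c x y => by
      apply Subtype.ext
      show (c • (x : Matrix (Fin n) (Fin n) F)) * y - (y : Matrix (Fin n) (Fin n) F) * (c • x)
          = c • ((x : Matrix (Fin n) (Fin n) F) * y - (y : Matrix (Fin n) (Fin n) F) * x)
      rw [smul_mul_assoc, mul_smul_comm, smul_sub])
    (fun x y y' => by
      apply Subtype.ext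
      show (x : Matrix (Fin n) (Fin n) F) * (y + y') - ((y : Matrix (Fin n) (Fin n) F) + y') * x
          = ((x : Matrix (Fin n) (Fin n) F) * y - (y : Matrix (Fin n) (Fin n) F) * x)
            + ((x : Matrix (Fin n) (Fin n) F) * y' - (y' : Matrix (Fin n) (Fin n) F) * x)
      noncomm_ring)
    (fun c x y => by
      apply Subtype.ext
      show (x : Matrix (Fin n) (Fin n) F) * (c • y) - (c • (y : Matrix (Fin n) (Fin n) F)) * x
          = c • ((x : Matrix (Fin n) (Fin n) F) * y - (y : Matrix (Fin n) (Fin n) F) * x)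
      rw [smul_mul_assoc, mul_smul_comm, smul_sub])

/-- The elementary matrix `E_{ij}` (with `i < j`) as an element of `𝔫`. -/
def Eelt (F : Type*) [Field F] (n : ℕ) (i j : Fin n) (h : i < j) : strictUpper F n :=
  ⟨Matrix.single i j 1, by
    intro a b hba
    refine Matrix.single_apply_of_ne i j 1 a b ?_
    rintro ⟨rfl, rfl⟩
    exact absurd h (not_lt.mpr hba)⟩

/-- The support of a linear form `f ∈ 𝔫*`. -/
def Supp (F : Type*) [Field F] (n : ℕ) (f : Module.Dual F (strictUpper F n)) :
    Set (Fin n × Fin n) :=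
  {p | ∃ h : p.1 < p.2, f (Eelt F n p.1 p.2 h) ≠ 0}

/-- A matrix is upper unitriangular if it has `1`'s on the diagonal and
`0`'s below the diagonal. -/
def IsUnitriangular {F : Type*} [Field F] {n : ℕ} (g : Matrix (Fin n) (Fin n) F) : Prop :=
  (∀ i, g i i = 1) ∧ ∀ i j : Fin n, j < i → g i j = 0

/-- The coadjoint orbit `N·f` of a linear form `f ∈ 𝔫*`. -/
def coadjOrbit (F : Type*) [Field F] (n : ℕ) (f : Module.Dual F (strictUpper F n)) :
    Set (Module.Dual F (strictUpper F n)) :=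
  {f' | ∃ g g' : Matrix (Fin n) (Fin n) F, IsUnitriangular g ∧ IsUnitriangular g' ∧
    g * g' = 1 ∧ g' * g = 1 ∧
    ∀ (x : strictUpper F n) (hx : g' * (x : Matrix (Fin n) (Fin n) F) * g ∈ strictUpper F n),
      f' x = f ⟨g' * (x : Matrix (Fin n) (Fin n) F) * g, hx⟩}

/-- The rank of the alternating bilinear form `B_f(x, y) = f([x, y])` on `𝔫`,
i.e. the rank of the linear map `𝔫 → 𝔫*`, `x ↦ B_f(x, ·)`. -/
noncomputable def rkB (F : Type*) [Field F] (n : ℕ) (f : Module.Dual F (strictUpper F n)) : ℕ :=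
  Module.finrank F (LinearMap.range (LinearMap.compr₂ (commBracket F n) f))

section Aux
variable {F : Type*} [Field F]

/-- basis elements -/
noncomputable def e01 (F : Type*) [Field F] : strictUpper F 4 := Eelt F 4 0 1 (by decide)
noncomputable def e02 (F : Type*) [Field F] : strictUpper F 4 := Eelt F 4 0 2 (by decide)
noncomputable def e03 (F : Type*) [Field F] : strictUpper F 4 := Eelt F 4 0 3 (by decide)
noncomputable def e12 (F : Type*) [Field F] : strictUpper F 4 := Eelt F 4 1 2 (by decide)
noncomputable def e13 (F : Type*) [Field F] : strictUpper F 4 := Eelt F 4 1 3 (by decide)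
noncomputable def e23 (F : Type*) [Field F] : strictUpper F 4 := Eelt F 4 2 3 (by decide)

lemma decomp (x : strictUpper F 4) :
    x = (x : Matrix (Fin 4) (Fin 4) F) 0 1 • e01 F + (x : Matrix (Fin 4) (Fin 4) F) 0 2 • e02 F
      + (x : Matrix (Fin 4) (Fin 4) F) 0 3 • e03 F + (x : Matrix (Fin 4) (Fin 4) F) 1 2 • e12 F
      + (x : Matrix (Fin 4) (Fin 4) F) 1 3 • e13 F + (x : Matrix (Fin 4) (Fin 4) F) 2 3 • e23 F := by
  apply Subtype.ext
  ext i j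
  fin_cases i <;> fin_cases j <;>
    simp [e01, e02, e03, e12, e13, e23, Eelt, Matrix.single] <;>
    exact x.2 _ _ (by decide)

end Aux
section Aux2
variable {F : Type*} [Field F]

lemma dualEval (f : Module.Dual F (strictUpper F 4)) (x : strictUpper F 4) :
    f x = (x : Matrix (Fin 4) (Fin 4) F) 0 1 * f (e01 F) + (x : Matrix (Fin 4) (Fin 4) F) 0 2 * f (e02 F)
      + (x : Matrix (Fin 4) (Fin 4) F) 0 3 * f (e03 F) + (x : Matrix (Fin 4) (Fin 4) F) 1 2 * f (e12 F)
      + (x : Matrix (Fin 4) (Fin 4) F) 1 3 * f (e13 F) + (x : Matrix (Fin 4) (Fin 4) F) 2 3 * f (e23 F) := by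
  conv_lhs => rw [decomp x]
  simp [smul_eq_mul]

lemma dualExt {f g : Module.Dual F (strictUpper F 4)}
    (h1 : f (e01 F) = g (e01 F)) (h2 : f (e02 F) = g (e02 F)) (h3 : f (e03 F) = g (e03 F))
    (h4 : f (e12 F) = g (e12 F)) (h5 : f (e13 F) = g (e13 F)) (h6 : f (e23 F) = g (e23 F)) :
    f = g := by
  apply LinearMap.ext; intro x
  rw [dualEval f x, dualEval g x, h1, h2, h3, h4, h5, h6]

/-- coordinate functional -/
def piF (F : Type*) [Field F] (i j : Fin 4) : Module.Dual F (strictUpper F 4) where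
  toFun x := (x : Matrix (Fin 4) (Fin 4) F) i j
  map_add' x y := rfl
  map_smul' c x := rfl

@[simp] lemma piF_apply (i j : Fin 4) (x : strictUpper F 4) :
    piF F i j x = (x : Matrix (Fin 4) (Fin 4) F) i j := rfl

@[simp] lemma e_coe (i j : Fin 4) (h : i < j) :
    ((Eelt F 4 i j h : strictUpper F 4) : Matrix (Fin 4) (Fin 4) F) = Matrix.single i j 1 := rfl

end Aux2
section Aux3
variable {F : Type*} [Field F]

@[simp] lemma commBracket_coe (x y : strictUpper F 4) :
    ((commBracket F 4 x y : strictUpper F 4) : Matrix (Fin 4) (Fin 4) F)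
      = (x : Matrix (Fin 4) (Fin 4) F) * y - (y : Matrix (Fin 4) (Fin 4) F) * x := rfl

lemma Bval (f : Module.Dual F (strictUpper F 4)) (x y : strictUpper F 4) :
    f (commBracket F 4 x y)
      = f (e02 F) * ((x:Matrix (Fin 4) (Fin 4) F) 0 1 * (y:Matrix (Fin 4) (Fin 4) F) 1 2
            - (y:Matrix (Fin 4) (Fin 4) F) 0 1 * (x:Matrix (Fin 4) (Fin 4) F) 1 2)
      + f (e13 F) * ((x:Matrix (Fin 4) (Fin 4) F) 1 2 * (y:Matrix (Fin 4) (Fin 4) F) 2 3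
            - (y:Matrix (Fin 4) (Fin 4) F) 1 2 * (x:Matrix (Fin 4) (Fin 4) F) 2 3)
      + f (e03 F) * ((x:Matrix (Fin 4) (Fin 4) F) 0 1 * (y:Matrix (Fin 4) (Fin 4) F) 1 3
            + (x:Matrix (Fin 4) (Fin 4) F) 0 2 * (y:Matrix (Fin 4) (Fin 4) F) 2 3
            - (y:Matrix (Fin 4) (Fin 4) F) 0 1 * (x:Matrix (Fin 4) (Fin 4) F) 1 3
            - (y:Matrix (Fin 4) (Fin 4) F) 0 2 * (x:Matrix (Fin 4) (Fin 4) F) 2 3) := by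
  rw [dualEval]
  simp only [commBracket_coe, Matrix.sub_apply, Matrix.mul_apply, Fin.sum_univ_four]
  simp only [x.2 0 0 (by decide), x.2 1 0 (by decide), x.2 1 1 (by decide), x.2 2 0 (by decide), x.2 2 1 (by decide), x.2 2 2 (by decide), x.2 3 0 (by decide), x.2 3 1 (by decide), x.2 3 2 (by decide), x.2 3 3 (by decide), y.2 0 0 (by decide), y.2 1 0 (by decide), y.2 1 1 (by decide), y.2 2 0 (by decide), y.2 2 1 (by decide), y.2 2 2 (by decide), y.2 3 0 (by decide), y.2 3 1 (by decide), y.2 3 2 (by decide), y.2 3 3 (by decide)]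
  ring

end Aux3
section Aux4
variable {F : Type*} [Field F]

/-- `L f x = B_f(x, ·)` -/
noncomputable def Lmap (f : Module.Dual F (strictUpper F 4)) :
    strictUpper F 4 →ₗ[F] Module.Dual F (strictUpper F 4) :=
  LinearMap.compr₂ (commBracket F 4) f

@[simp] lemma Lmap_apply (f : Module.Dual F (strictUpper F 4)) (x y : strictUpper F 4) :
    Lmap f x y = f (commBracket F 4 x y) := rfl

lemma L_e01 (f : Module.Dual F (strictUpper F 4)) :
    Lmap f (e01 F) = f (e02 F) • piF F 1 2 + f (e03 F) • piF F 1 3 := by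
  apply dualExt <;>
    simp [Bval, e01, e02, e03, e12, e13, e23, Eelt, Matrix.single, Matrix.of_apply]

end Aux4
section Aux5
variable {F : Type*} [Field F]

lemma L_e02 (f : Module.Dual F (strictUpper F 4)) :
    Lmap f (e02 F) = f (e03 F) • piF F 2 3 := by
  apply dualExt <;>
    simp [Bval, e01, e02, e03, e12, e13, e23, Eelt, Matrix.single, Matrix.of_apply]

lemma L_e03 (f : Module.Dual F (strictUpper F 4)) : Lmap f (e03 F) = 0 := by
  apply dualExt <;>
    simp [Bval, e01, e02, e03, e12, e13, e23, Eelt, Matrix.single, Matrix.of_apply]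

lemma L_e12 (f : Module.Dual F (strictUpper F 4)) :
    Lmap f (e12 F) = (-f (e02 F)) • piF F 0 1 + f (e13 F) • piF F 2 3 := by
  apply dualExt <;>
    simp [Bval, e01, e02, e03, e12, e13, e23, Eelt, Matrix.single, Matrix.of_apply]

lemma L_e13 (f : Module.Dual F (strictUpper F 4)) :
    Lmap f (e13 F) = (-f (e03 F)) • piF F 0 1 := by
  apply dualExt <;>
    simp [Bval, e01, e02, e03, e12, e13, e23, Eelt, Matrix.single, Matrix.of_apply]

lemma L_e23 (f : Module.Dual F (strictUpper F 4)) :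
    Lmap f (e23 F) = (-f (e03 F)) • piF F 0 2 + (-f (e13 F)) • piF F 1 2 := by
  apply dualExt <;>
    simp [Bval, e01, e02, e03, e12, e13, e23, Eelt, Matrix.single, Matrix.of_apply]

lemma spanTop : Submodule.span F {e01 F, e02 F, e03 F, e12 F, e13 F, e23 F} = ⊤ := by
  rw [eq_top_iff]
  intro x _
  rw [decomp x]
  refine Submodule.add_mem _ (Submodule.add_mem _ (Submodule.add_mem _ (Submodule.add_mem _
    (Submodule.add_mem _ (Submodule.smul_mem _ _ ?_) (Submodule.smul_mem _ _ ?_))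
    (Submodule.smul_mem _ _ ?_)) (Submodule.smul_mem _ _ ?_)) (Submodule.smul_mem _ _ ?_))
    (Submodule.smul_mem _ _ ?_) <;> exact Submodule.subset_span (by simp)

lemma range_L (f : Module.Dual F (strictUpper F 4)) :
    LinearMap.range (Lmap f)
      = Submodule.span F (Lmap f '' {e01 F, e02 F, e03 F, e12 F, e13 F, e23 F}) := by
  rw [← Submodule.map_span, spanTop, Submodule.map_top]
end Aux5
section Aux6
variable {F : Type*} [Field F]

lemma rank_le_two (f : Module.Dual F (strictUpper F 4)) (h03 : f (e03 F) = 0) :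
    rkB F 4 f ≤ 2 := by
  have hle : LinearMap.range (Lmap f)
      ≤ Submodule.span F {piF F 1 2, Lmap f (e12 F)} := by
    rw [range_L]
    refine Submodule.span_le.2 ?_
    rintro _ ⟨z, hz, rfl⟩
    simp only [Set.mem_insert_iff, Set.mem_singleton_iff] at hz
    rcases hz with rfl | rfl | rfl | rfl | rfl | rfl
    · rw [L_e01, h03]
      refine Submodule.add_mem _ (Submodule.smul_mem _ _
        (Submodule.subset_span (by simp))) (by simp)
    · rw [L_e02, h03]; simp
    · rw [L_e03]; exact Submodule.zero_mem _
    · exact Submodule.subset_span (by simp)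
    · rw [L_e13, h03]; simp
    · rw [L_e23, h03]
      refine Submodule.add_mem _ (by simp) (Submodule.smul_mem _ _
        (Submodule.subset_span (by simp)))
  have aux : ∀ v : Module.Dual F (strictUpper F 4),
      Module.finrank F (F ∙ v) ≤ 1 := by
    intro v
    by_cases h : v = 0
    · rw [h, Submodule.span_zero_singleton]; simp
    · rw [finrank_span_singleton h]
  calc rkB F 4 f ≤ Module.finrank F (Submodule.span F {piF F 1 2, Lmap f (e12 F)}) :=
        Submodule.finrank_mono hle
    _ ≤ 2 := by
        rw [Submodule.span_insert]
        refine (Submodule.finrank_add_le_finrank_add_finrank _ _).trans ?_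
        have h1 := aux (piF F 1 2)
        have h2 := aux (Lmap f (e12 F))
        omega
end Aux6
section Aux7
variable {F : Type*} [Field F]

lemma rank_eq_four (f : Module.Dual F (strictUpper F 4))
    (h02 : f (e02 F) = 0) (h13 : f (e13 F) = 0) (h03 : f (e03 F) ≠ 0) :
    rkB F 4 f = 4 := by
  set c := f (e03 F) with hc
  set v : Fin 4 → Module.Dual F (strictUpper F 4) :=
    ![c • piF F 1 3, c • piF F 2 3, (-c) • piF F 0 1, (-c) • piF F 0 2] with hv
  have hv0 : Lmap f (e01 F) = v 0 := by rw [L_e01, h02]; simp [hv]; rfl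
  have hv1 : Lmap f (e02 F) = v 1 := by rw [L_e02]; simp [hv]; rfl
  have hv2 : Lmap f (e13 F) = v 2 := by rw [L_e13]; simp [hv]; rfl
  have hv3 : Lmap f (e23 F) = v 3 := by rw [L_e23, h13]; simp [hv]; rfl
  have hrange : LinearMap.range (Lmap f) = Submodule.span F (Set.range v) := by
    apply le_antisymm
    · rw [range_L]
      refine Submodule.span_le.2 ?_
      rintro _ ⟨z, hz, rfl⟩
      simp only [Set.mem_insert_iff, Set.mem_singleton_iff] at hz
      rcases hz with rfl | rfl | rfl | rfl | rfl | rfl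
      · exact Submodule.subset_span ⟨0, hv0.symm⟩
      · exact Submodule.subset_span ⟨1, hv1.symm⟩
      · rw [L_e03]; exact Submodule.zero_mem _
      · rw [L_e12, h02, h13]; simp
      · exact Submodule.subset_span ⟨2, hv2.symm⟩
      · exact Submodule.subset_span ⟨3, hv3.symm⟩
    · refine Submodule.span_le.2 ?_
      rintro _ ⟨i, rfl⟩
      fin_cases i
      · exact ⟨e01 F, hv0⟩
      · exact ⟨e02 F, hv1⟩
      · exact ⟨e13 F, hv2⟩
      · exact ⟨e23 F, hv3⟩
  have hli : LinearIndependent F v := by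
    rw [Fintype.linearIndependent_iff]
    intro g hg
    have key : ∀ x : strictUpper F 4,
        g 0 * (c • piF F 1 3) x + g 1 * (c • piF F 2 3) x
          + g 2 * ((-c) • piF F 0 1) x + g 3 * ((-c) • piF F 0 2) x = 0 := by
      intro x
      have := congrArg (fun φ : Module.Dual F (strictUpper F 4) => φ x) hg
      simpa [hv, Fin.sum_univ_four, smul_eq_mul, mul_assoc] using this
    have k0 := key (e13 F)
    have k1 := key (e23 F)
    have k2 := key (e01 F)
    have k3 := key (e02 F)
    simp [e01, e02, e13, e23, Eelt, Matrix.single, Matrix.of_apply] at k0 k1 k2 k3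
    intro i
    fin_cases i
    · rcases k0 with h | h; exact h; exact absurd h h03
    · rcases k1 with h | h; exact h; exact absurd h h03
    · rcases k2 with h | h; exact h; exact absurd h h03
    · rcases k3 with h | h; exact h; exact absurd h h03
  have : rkB F 4 f = Module.finrank F (Submodule.span F (Set.range v)) := by
    rw [rkB]; rw [show LinearMap.compr₂ (commBracket F 4) f = Lmap f from rfl, hrange]
  rw [this, finrank_span_eq_card hli]
  simp
end Aux7
section Aux8
variable {F : Type*} [Field F]

lemma conj_entry (g g' : Matrix (Fin 4) (Fin 4) F) (i j k l : Fin 4) :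
    (g' * Matrix.single i j (1:F) * g) k l = g' k i * g j l := by
  rw [Matrix.mul_apply]
  simp only [Matrix.mul_apply, Matrix.single, Matrix.of_apply]
  simp [ite_and, mul_ite, ite_mul, Finset.sum_ite_eq, Finset.sum_ite_eq']
end Aux8
section Aux9
variable {F : Type*} [Field F]

lemma conj_mem {g g' : Matrix (Fin 4) (Fin 4) F}
    (hg : IsUnitriangular g) (hg' : IsUnitriangular g') {i j : Fin 4} (hij : i < j) :
    g' * Matrix.single i j (1:F) * g ∈ strictUpper F 4 := by
  intro k l hlk
  rw [conj_entry]
  by_cases hk : i < k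
  · rw [hg'.2 k i hk, zero_mul]
  · rw [hg.2 j l (lt_of_le_of_lt (hlk.trans (not_lt.1 hk)) hij), mul_zero]

/-- the (0,3) coordinate is invariant on coadjoint orbits -/
lemma orbit_inv03 {f h : Module.Dual F (strictUpper F 4)} (hh : h ∈ coadjOrbit F 4 f) :
    h (e03 F) = f (e03 F) := by
  obtain ⟨g, g', hg, hg', _, _, key⟩ := hh
  rw [key (e03 F) (conj_mem hg hg' (by decide)), dualEval]
  simp only [show ((e03 F : strictUpper F 4) : Matrix (Fin 4) (Fin 4) F)
      = Matrix.single 0 3 1 from rfl, conj_entry]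
  simp only [hg'.2 1 0 (by decide), hg'.2 2 0 (by decide), hg'.2 3 0 (by decide),
    hg.2 3 0 (by decide), hg.2 3 1 (by decide), hg.2 3 2 (by decide), hg'.1 0, hg.1 3]
  ring
end Aux9
section Aux10
variable {F : Type*} [Field F]

/-- the quantity `f12*f03 - f02*f13` is invariant on coadjoint orbits -/
lemma orbit_invD {f h : Module.Dual F (strictUpper F 4)} (hh : h ∈ coadjOrbit F 4 f) :
    h (e12 F) * h (e03 F) - h (e02 F) * h (e13 F)
      = f (e12 F) * f (e03 F) - f (e02 F) * f (e13 F) := by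
  obtain ⟨g, g', hg, hg', _, _, key⟩ := hh
  have h03 : h (e03 F) = f (e03 F) := orbit_inv03 ⟨g, g', hg, hg', ‹_›, ‹_›, key⟩
  have h02 : h (e02 F) = f (e02 F) + g 2 3 * f (e03 F) := by
    rw [key (e02 F) (conj_mem hg hg' (by decide)), dualEval]
    simp only [show ((e02 F : strictUpper F 4) : Matrix (Fin 4) (Fin 4) F)
        = Matrix.single 0 2 1 from rfl, conj_entry]
    simp only [hg'.2 1 0 (by decide), hg'.2 2 0 (by decide), hg'.2 3 0 (by decide),
      hg.2 2 1 (by decide), hg'.1 0, hg.1 2]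
    ring
  have h13 : h (e13 F) = g' 0 1 * f (e03 F) + f (e13 F) := by
    rw [key (e13 F) (conj_mem hg hg' (by decide)), dualEval]
    simp only [show ((e13 F : strictUpper F 4) : Matrix (Fin 4) (Fin 4) F)
        = Matrix.single 1 3 1 from rfl, conj_entry]
    simp only [hg'.2 2 1 (by decide), hg'.2 3 1 (by decide),
      hg.2 3 0 (by decide), hg.2 3 1 (by decide), hg.2 3 2 (by decide), hg'.1 1, hg.1 3]
    ring
  have h12 : h (e12 F) = g' 0 1 * (f (e02 F) + g 2 3 * f (e03 F))
      + (f (e12 F) + g 2 3 * f (e13 F)) := by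
    rw [key (e12 F) (conj_mem hg hg' (by decide)), dualEval]
    simp only [show ((e12 F : strictUpper F 4) : Matrix (Fin 4) (Fin 4) F)
        = Matrix.single 1 2 1 from rfl, conj_entry]
    simp only [hg'.2 2 1 (by decide), hg'.2 3 1 (by decide),
      hg.2 2 1 (by decide), hg'.1 1, hg.1 2]
    ring
  rw [h03, h02, h13, h12]; ring
end Aux10
section Aux11
variable {F : Type*} [Field F]

lemma mem_supp {h : Module.Dual F (strictUpper F 4)} {i j : Fin 4} (hlt : i < j) :
    (i, j) ∈ Supp F 4 h ↔ h (Eelt F 4 i j hlt) ≠ 0 :=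
  ⟨fun ⟨_, hne⟩ => hne, fun hne => ⟨hlt, hne⟩⟩

lemma not_mem_supp (h : Module.Dual F (strictUpper F 4)) {i j : Fin 4} (hlt : ¬ i < j) :
    (i, j) ∉ Supp F 4 h :=
  fun hp => hlt hp.1

@[simp] lemma piF_e01 (i j : Fin 4) : piF F i j (e01 F) = if i = 0 ∧ j = 1 then 1 else 0 := by
  simp [piF_apply, e01, Eelt, Matrix.single, Matrix.of_apply, eq_comm]
@[simp] lemma piF_e02 (i j : Fin 4) : piF F i j (e02 F) = if i = 0 ∧ j = 2 then 1 else 0 := by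
  simp [piF_apply, e02, Eelt, Matrix.single, Matrix.of_apply, eq_comm]
@[simp] lemma piF_e03 (i j : Fin 4) : piF F i j (e03 F) = if i = 0 ∧ j = 3 then 1 else 0 := by
  simp [piF_apply, e03, Eelt, Matrix.single, Matrix.of_apply, eq_comm]
@[simp] lemma piF_e12 (i j : Fin 4) : piF F i j (e12 F) = if i = 1 ∧ j = 2 then 1 else 0 := by
  simp [piF_apply, e12, Eelt, Matrix.single, Matrix.of_apply, eq_comm]
@[simp] lemma piF_e13 (i j : Fin 4) : piF F i j (e13 F) = if i = 1 ∧ j = 3 then 1 else 0 := by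
  simp [piF_apply, e13, Eelt, Matrix.single, Matrix.of_apply, eq_comm]
@[simp] lemma piF_e23 (i j : Fin 4) : piF F i j (e23 F) = if i = 2 ∧ j = 3 then 1 else 0 := by
  simp [piF_apply, e23, Eelt, Matrix.single, Matrix.of_apply, eq_comm]

end Aux11
section Aux12
set_option maxHeartbeats 1600000
variable {F : Type*} [Field F]

lemma orbit_rep_mem (f : Module.Dual F (strictUpper F 4)) (hC : f (e03 F) ≠ 0) :
    (f (e03 F) • piF F 0 3
      + ((f (e12 F) * f (e03 F) - f (e02 F) * f (e13 F)) / f (e03 F)) • piF F 1 2)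
      ∈ coadjOrbit F 4 f := by
  set A := f (e01 F) with hA
  set Bc := f (e02 F) with hB
  set C := f (e03 F) with hCdef
  set P := f (e12 F) with hP
  set Q := f (e13 F) with hQ
  set R := f (e23 F) with hR
  refine ⟨!![1, Q/C, R/C, 0;
             0, 1, 0, -A/C;
             0, 0, 1, -Bc/C;
             0, 0, 0, 1],
          !![1, -Q/C, -R/C, -(A*Q)/C^2 - (Bc*R)/C^2;
             0, 1, 0, A/C;
             0, 0, 1, Bc/C;
             0, 0, 0, 1], ⟨?_, ?_⟩, ⟨?_, ?_⟩, ?_, ?_, ?_⟩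
  · intro i; fin_cases i <;> simp
  · intro i j hij
    fin_cases i <;> fin_cases j <;>
      first
        | exact absurd hij (by decide)
        | simp [Matrix.vecHead, Matrix.vecTail]
  · intro i; fin_cases i <;> simp
  · intro i j hij
    fin_cases i <;> fin_cases j <;>
      first
        | exact absurd hij (by decide)
        | simp [Matrix.vecHead, Matrix.vecTail]
  · ext i j
    fin_cases i <;> fin_cases j <;>
      · simp only [Matrix.mul_apply, Fin.sum_univ_four, Matrix.one_apply, Matrix.cons_val',
          Matrix.cons_val_zero, Matrix.cons_val_one, Matrix.head_cons, Matrix.empty_val',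
          Matrix.cons_val_fin_one, Matrix.head_fin_const, Matrix.cons_val_two,
          Matrix.cons_val_three, Matrix.tail_cons, Matrix.of_apply]
        norm_num [Fin.ext_iff]
        try field_simp
        try ring
  · ext i j
    fin_cases i <;> fin_cases j <;>
      · simp only [Matrix.mul_apply, Fin.sum_univ_four, Matrix.one_apply, Matrix.cons_val',
          Matrix.cons_val_zero, Matrix.cons_val_one, Matrix.head_cons, Matrix.empty_val',
          Matrix.cons_val_fin_one, Matrix.head_fin_const, Matrix.cons_val_two,
          Matrix.cons_val_three, Matrix.tail_cons, Matrix.of_apply]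
        norm_num [Fin.ext_iff]
        try field_simp
        try ring
  · intro x hx
    rw [dualEval f ⟨_, hx⟩]
    have hcoe : ∀ (M : Matrix (Fin 4) (Fin 4) F) (hm : M ∈ strictUpper F 4),
        ((⟨M, hm⟩ : strictUpper F 4) : Matrix (Fin 4) (Fin 4) F) = M := fun _ _ => rfl
    simp only [LinearMap.add_apply, LinearMap.smul_apply, piF_apply, smul_eq_mul, hcoe,
      Matrix.mul_apply, Fin.sum_univ_four, Matrix.cons_val', Matrix.cons_val_zero,
      Matrix.cons_val_one, Matrix.head_cons, Matrix.empty_val', Matrix.cons_val_fin_one,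
      Matrix.head_fin_const, Matrix.cons_val_two, Matrix.cons_val_three, Matrix.tail_cons,
      Matrix.of_apply, x.2 0 0 (by decide), x.2 1 0 (by decide), x.2 1 1 (by decide), x.2 2 0 (by decide), x.2 2 1 (by decide), x.2 2 2 (by decide), x.2 3 0 (by decide), x.2 3 1 (by decide), x.2 3 2 (by decide), x.2 3 3 (by decide)]
    simp only [← hA, ← hB, ← hCdef, ← hP, ← hQ, ← hR]
    field_simp
    ring_nf
end Aux12
section Aux13
variable {F : Type*} [Field F]

lemma supp_rep1 (C d : F) (hC : C ≠ 0) (hd : d ≠ 0) :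
    Supp F 4 (C • piF F 0 3 + d • piF F 1 2)
      = {((1:Fin 4),(2:Fin 4)), ((0:Fin 4),(3:Fin 4))} := by
  ext p
  obtain ⟨i, j⟩ := p
  simp only [Supp, Set.mem_setOf_eq, Set.mem_insert_iff, Set.mem_singleton_iff,
    LinearMap.add_apply, LinearMap.smul_apply, smul_eq_mul, Prod.mk.injEq]
  fin_cases i <;> fin_cases j <;>
    simp +decide [piF_apply, Eelt, Matrix.single, Matrix.of_apply, hC, hd, exists_prop,
      Fin.ext_iff, Fin.lt_def] <;> decide

lemma supp_rep0 (C : F) (hC : C ≠ 0) :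
    Supp F 4 (C • piF F 0 3 + (0:F) • piF F 1 2) = {((0:Fin 4),(3:Fin 4))} := by
  ext p
  obtain ⟨i, j⟩ := p
  simp only [Supp, Set.mem_setOf_eq, Set.mem_singleton_iff,
    LinearMap.add_apply, LinearMap.smul_apply, smul_eq_mul, Prod.mk.injEq]
  fin_cases i <;> fin_cases j <;>
    simp +decide [piF_apply, Eelt, Matrix.single, Matrix.of_apply, hC, exists_prop,
      Fin.ext_iff, Fin.lt_def] <;> decide
end Aux13
section Aux14
variable {F : Type*} [Field F]

lemma supp_coords {h : Module.Dual F (strictUpper F 4)}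
    (hS : Supp F 4 h = {((1 : Fin 4), (2 : Fin 4)), ((0 : Fin 4), (3 : Fin 4))} ∨
          Supp F 4 h = {((0 : Fin 4), (3 : Fin 4))}) :
    h (e01 F) = 0 ∧ h (e02 F) = 0 ∧ h (e13 F) = 0 ∧ h (e23 F) = 0 ∧ h (e03 F) ≠ 0 := by
  have key : ∀ (i j : Fin 4) (hij : i < j), ((i, j) ∈ Supp F 4 h ↔
      h (Eelt F 4 i j hij) ≠ 0) := fun i j hij => mem_supp hij
  rcases hS with hS | hS <;>
  · refine ⟨?_, ?_, ?_, ?_, ?_⟩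
    · by_contra hne
      have := (key 0 1 (by decide)).2 hne
      rw [hS] at this
      simp +decide [Set.mem_insert_iff, Set.mem_singleton_iff, Prod.ext_iff, Fin.ext_iff] at this
    · by_contra hne
      have := (key 0 2 (by decide)).2 hne
      rw [hS] at this
      simp +decide [Set.mem_insert_iff, Set.mem_singleton_iff, Prod.ext_iff, Fin.ext_iff] at this
    · by_contra hne
      have := (key 1 3 (by decide)).2 hne
      rw [hS] at this
      simp +decide [Set.mem_insert_iff, Set.mem_singleton_iff, Prod.ext_iff, Fin.ext_iff] at this
    · by_contra hne
      have := (key 2 3 (by decide)).2 hne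
      rw [hS] at this
      simp +decide [Set.mem_insert_iff, Set.mem_singleton_iff, Prod.ext_iff, Fin.ext_iff] at this
    · refine (key 0 3 (by decide)).1 ?_
      rw [hS]
      simp
end Aux14
/-- `n = 4`: every coadjoint orbit of dimension 4 contains exactly one linear form `h`
with `Supp h = {(2,3), (1,4)}` or `Supp h = {(1,4)}` (0-based: `{(1,2), (0,3)}` or
`{(0,3)}`); conversely, every `h` with such support satisfies `rk B_h = 4`. -/
theorem dim_four_orbits_n4 (F : Type*) [Field F] [IsAlgClosed F] [CharZero F] :
    (∀ f : Module.Dual F (strictUpper F 4), rkB F 4 f = 4 →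
      ∃! h : Module.Dual F (strictUpper F 4), h ∈ coadjOrbit F 4 f ∧
        (Supp F 4 h = {((1 : Fin 4), (2 : Fin 4)), ((0 : Fin 4), (3 : Fin 4))} ∨
         Supp F 4 h = {((0 : Fin 4), (3 : Fin 4))})) ∧
    (∀ h : Module.Dual F (strictUpper F 4),
      (Supp F 4 h = {((1 : Fin 4), (2 : Fin 4)), ((0 : Fin 4), (3 : Fin 4))} ∨
       Supp F 4 h = {((0 : Fin 4), (3 : Fin 4))}) →
      rkB F 4 h = 4) := by
  constructor
  · intro f hf
    have hC : f (e03 F) ≠ 0 := by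
      intro h0
      have := rank_le_two f h0
      rw [hf] at this
      omega
    refine ⟨f (e03 F) • piF F 0 3
        + ((f (e12 F) * f (e03 F) - f (e02 F) * f (e13 F)) / f (e03 F)) • piF F 1 2,
      ⟨orbit_rep_mem f hC, ?_⟩, ?_⟩
    · by_cases hd : (f (e12 F) * f (e03 F) - f (e02 F) * f (e13 F)) / f (e03 F) = 0
      · right
        rw [hd]
        exact supp_rep0 _ hC
      · left
        exact supp_rep1 _ _ hC hd
    · rintro h' ⟨h'mem, h'supp⟩
      obtain ⟨z01, z02, z13, z23, h03ne⟩ := supp_coords h'supp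
      have i03 := orbit_inv03 h'mem
      have iD := orbit_invD h'mem
      rw [z02, z13, i03] at iD
      have h12 : h' (e12 F)
          = (f (e12 F) * f (e03 F) - f (e02 F) * f (e13 F)) / f (e03 F) := by
        rw [eq_div_iff hC]
        linear_combination iD
      apply dualExt <;>
      · simp only [LinearMap.add_apply, LinearMap.smul_apply, smul_eq_mul, piF_e01,
          piF_e02, piF_e03, piF_e12, piF_e13, piF_e23, z01, z02, z13, z23, i03, h12]
        norm_num [Fin.ext_iff]
        all_goals simp +decide
  · intro h hsupp
    obtain ⟨_, z02, z13, _, h03⟩ := supp_coords hsupp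
    exact rank_eq_four h z02 z13 h03
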